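/- (Kronecker-product block Lyapunov inequality underlying the global synchronization theorem.) Let P, Q ∈ ℝ^{n×n} be symmetric positive definite, G ∈ ℝ^{n×p}, ρ > 0, μ > 0, ℓ > 0 with ℓμ ≥ ρ, let A ∈ ℝ^{(N−1)×(N−1)} satisfy A + Aᵀ ≤ −μ·I_{N−1}, and let J₂, …, J_N ∈ ℝ^{n×n} satisfy P J_i + J_iᵀ P − ρ P G Gᵀ P ≤ −Q for each i. Then, with B = diag{J₂, …, J_N} + ℓ·(A ⊗ G Gᵀ P), one has (I_{N−1} ⊗ P)·B + Bᵀ·(I_{N−1} ⊗ P) ≤ −(I_{N−1} ⊗ Q). -/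

import Mathlib

open Matrix
open scoped Kronecker

private def bd {N1 n : ℕ} (C : Fin N1 → Matrix (Fin n) (Fin n) ℝ) :
    Matrix (Fin N1 × Fin n) (Fin N1 × Fin n) ℝ :=
  Matrix.of fun i j => if i.1 = j.1 then C i.1 i.2 j.2 else 0

private lemma bd_apply {N1 n : ℕ} (C : Fin N1 → Matrix (Fin n) (Fin n) ℝ) (i j) :
    bd C i j = if i.1 = j.1 then C i.1 i.2 j.2 else 0 := rfl

private lemma one_kron {N1 n : ℕ} (P : Matrix (Fin n) (Fin n) ℝ) :
    (1 : Matrix (Fin N1) (Fin N1) ℝ) ⊗ₖ P = bd (fun _ => P) := by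
  ext ⟨k, i⟩ ⟨l, j⟩
  simp [bd_apply, one_apply, ite_mul, kroneckerMap_apply]

private lemma bd_mul {N1 n : ℕ} (C D : Fin N1 → Matrix (Fin n) (Fin n) ℝ) :
    bd C * bd D = bd (fun k => C k * D k) := by
  ext ⟨k, i⟩ ⟨l, j⟩
  simp only [mul_apply, bd_apply, Fintype.sum_prod_type]
  rw [Finset.sum_eq_single k]
  · by_cases h : k = l <;> simp [h, mul_apply]
  · intro b _ hb; simp [hb.symm]
  · simp

private lemma bd_transpose {N1 n : ℕ} (C : Fin N1 → Matrix (Fin n) (Fin n) ℝ) :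
    (bd C)ᵀ = bd (fun k => (C k)ᵀ) := by
  ext ⟨k, i⟩ ⟨l, j⟩
  simp only [transpose_apply, bd_apply]
  by_cases h : k = l <;> simp [h, eq_comm]

private lemma bd_mulVec {N1 n : ℕ} (C : Fin N1 → Matrix (Fin n) (Fin n) ℝ)
    (x : Fin N1 × Fin n → ℝ) (k : Fin N1) (i : Fin n) :
    (bd C).mulVec x (k, i) = (C k).mulVec (fun j => x (k, j)) i := by
  simp only [mulVec, dotProduct, bd_apply, Fintype.sum_prod_type]
  rw [Finset.sum_eq_single k]
  · simp
  · intro b _ hb; simp [hb.symm]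
  · simp

private lemma bd_posSemidef {N1 n : ℕ} {C : Fin N1 → Matrix (Fin n) (Fin n) ℝ}
    (h : ∀ k, (C k).PosSemidef) : (bd C).PosSemidef := by
  refine posSemidef_iff_dotProduct_mulVec.mpr ⟨?_, ?_⟩
  · show (bd C)ᴴ = bd C
    rw [conjTranspose_eq_transpose_of_trivial, bd_transpose]
    have hC : (fun k => (C k)ᵀ) = C := funext fun k => by
      rw [← conjTranspose_eq_transpose_of_trivial]
      exact (h k).1
    rw [hC]
  · intro x
    have hx : star x ⬝ᵥ (bd C).mulVec x =
        ∑ k : Fin N1, star (fun i => x (k, i)) ⬝ᵥ (C k).mulVec (fun i => x (k, i)) := by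
      simp only [dotProduct, Fintype.sum_prod_type, bd_mulVec]
      rfl
    rw [hx]
    exact Finset.sum_nonneg fun k _ => (h k).dotProduct_mulVec_nonneg _

private lemma kron_posSemidef {N1 n : ℕ} {S : Matrix (Fin N1) (Fin N1) ℝ}
    {M : Matrix (Fin n) (Fin n) ℝ} (hS : S.PosSemidef) (hM : M.PosSemidef) :
    (S ⊗ₖ M).PosSemidef := by
  exact hS.kronecker hM



private lemma psd_add {m : Type*} [Fintype m] {M N : Matrix m m ℝ}
    (hM : M.PosSemidef) (hN : N.PosSemidef) : (M + N).PosSemidef := by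
  refine .of_dotProduct_mulVec_nonneg (hM.1.add hN.1) fun x => ?_
  have := add_nonneg (hM.dotProduct_mulVec_nonneg x) (hN.dotProduct_mulVec_nonneg x)
  simpa [add_mulVec, dotProduct_add] using this

private lemma psd_smul {m : Type*} [Fintype m] {M : Matrix m m ℝ} {c : ℝ}
    (hM : M.PosSemidef) (hc : 0 ≤ c) : (c • M).PosSemidef := by
  refine .of_dotProduct_mulVec_nonneg (by rw [Matrix.IsHermitian, conjTranspose_smul, star_trivial, hM.1.eq]) fun x => ?_
  have := mul_nonneg hc (hM.dotProduct_mulVec_nonneg x)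
  simpa [smul_mulVec, dotProduct_smul, smul_eq_mul] using this



/-- (Kronecker-product block Lyapunov inequality.)  Let `P, Q` be symmetric
positive definite `n × n` matrices, `G ∈ ℝ^{n×p}`, `ρ, μ, ℓ > 0` with `ℓμ ≥ ρ`, let `A` (of size
`N−1`, here `N1`) satisfy `A + Aᵀ ≤ −μ I`, and let `Jᵢ` satisfy
`P Jᵢ + Jᵢᵀ P − ρ P G Gᵀ P ≤ −Q` for each `i`.  Then with
`B = diag{J₂,…,J_N} + ℓ (A ⊗ G Gᵀ P)` one has
`(I ⊗ P) B + Bᵀ (I ⊗ P) ≤ −(I ⊗ Q)`.  (`M ≤ M'` means `M' − M` is positive semidefinite.) -/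
theorem stmt9_kronecker_lyapunov (n p N1 : ℕ)
    (P Q : Matrix (Fin n) (Fin n) ℝ) (hP : P.PosDef) (hQ : Q.PosDef)
    (G : Matrix (Fin n) (Fin p) ℝ)
    (ρ μ ℓ : ℝ) (hρ : 0 < ρ) (hμ : 0 < μ) (hℓ : 0 < ℓ) (hℓμ : ρ ≤ ℓ * μ)
    (A : Matrix (Fin N1) (Fin N1) ℝ)
    (hA : ((-μ) • (1 : Matrix (Fin N1) (Fin N1) ℝ) - (A + Aᵀ)).PosSemidef)
    (J : Fin N1 → Matrix (Fin n) (Fin n) ℝ)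
    (hJ : ∀ i, ((-Q) - (P * J i + (J i)ᵀ * P - ρ • (P * G * Gᵀ * P))).PosSemidef) :
    ((-(((1 : Matrix (Fin N1) (Fin N1) ℝ)) ⊗ₖ Q)) -
        (((1 : Matrix (Fin N1) (Fin N1) ℝ) ⊗ₖ P) *
            ((Matrix.of fun i j : Fin N1 × Fin n =>
                if i.1 = j.1 then J i.1 i.2 j.2 else 0) +
              ℓ • (A ⊗ₖ (G * Gᵀ * P))) +
          ((Matrix.of fun i j : Fin N1 × Fin n =>
                if i.1 = j.1 then J i.1 i.2 j.2 else 0) +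
              ℓ • (A ⊗ₖ (G * Gᵀ * P)))ᵀ *
            ((1 : Matrix (Fin N1) (Fin N1) ℝ) ⊗ₖ P))).PosSemidef := by
  have hPt : Pᵀ = P := by
    rw [← conjTranspose_eq_transpose_of_trivial]; exact hP.1.eq
  set M : Matrix (Fin n) (Fin n) ℝ := P * G * Gᵀ * P with hMdef
  set S : Matrix (Fin N1) (Fin N1) ℝ :=
    (ℓ * μ - ρ) • (1 : Matrix (Fin N1) (Fin N1) ℝ) +
      ℓ • ((-μ) • (1 : Matrix (Fin N1) (Fin N1) ℝ) - (A + Aᵀ)) with hSdef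
  set X : Fin N1 → Matrix (Fin n) (Fin n) ℝ :=
    fun k => (-Q) - (P * J k + (J k)ᵀ * P - ρ • M) with hXdef
  have hDef : (Matrix.of fun i j : Fin N1 × Fin n =>
      if i.1 = j.1 then J i.1 i.2 j.2 else 0) = bd J := rfl
  have h1 : ((1 : Matrix (Fin N1) (Fin N1) ℝ) ⊗ₖ P) *
      (bd J + ℓ • (A ⊗ₖ (G * Gᵀ * P))) =
      bd (fun k => P * J k) + ℓ • (A ⊗ₖ M) := by
    rw [mul_add, one_kron, bd_mul, Matrix.mul_smul]
    congr 1
    rw [← one_kron, ← mul_kronecker_mul, one_mul]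
    congr 1
    simp [hMdef, Matrix.mul_assoc]
  have h2 : (bd J + ℓ • (A ⊗ₖ (G * Gᵀ * P)))ᵀ *
      ((1 : Matrix (Fin N1) (Fin N1) ℝ) ⊗ₖ P) =
      bd (fun k => (J k)ᵀ * P) + ℓ • (Aᵀ ⊗ₖ M) := by
    rw [transpose_add, transpose_smul, bd_transpose, add_mul, Matrix.smul_mul,
      one_kron, bd_mul, ← kroneckerMap_transpose, ← one_kron, ← mul_kronecker_mul, mul_one]
    congr 2
    rw [transpose_mul, transpose_mul, transpose_transpose, hPt]
    simp [hMdef, Matrix.mul_assoc]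
  rw [hDef, h1, h2]
  have key : (-(((1 : Matrix (Fin N1) (Fin N1) ℝ)) ⊗ₖ Q)) -
      ((bd (fun k => P * J k) + ℓ • (A ⊗ₖ M)) +
        (bd (fun k => (J k)ᵀ * P) + ℓ • (Aᵀ ⊗ₖ M))) = bd X + S ⊗ₖ M := by
    ext ⟨k, i⟩ ⟨l, j⟩
    simp only [Matrix.sub_apply, Matrix.neg_apply, Matrix.add_apply, Matrix.smul_apply, kroneckerMap_apply, bd_apply,
      hXdef, hSdef, Matrix.add_apply, Matrix.sub_apply, Matrix.smul_apply, one_apply,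
      transpose_apply, Matrix.neg_apply, smul_eq_mul]
    by_cases h : k = l <;> simp [h] <;> ring
  rw [key]
  have hM : M.PosSemidef := by
    have : M = (Gᵀ * P)ᴴ * (Gᵀ * P) := by
      rw [conjTranspose_eq_transpose_of_trivial, transpose_mul, transpose_transpose, hPt]
      simp [hMdef, Matrix.mul_assoc]
    rw [this]
    exact posSemidef_conjTranspose_mul_self _
  have hS : S.PosSemidef := by
    refine psd_add (psd_smul Matrix.PosSemidef.one ?_) (psd_smul hA hℓ.le)
    linarith
  exact psd_add (bd_posSemidef fun k => hJ k) (kron_posSemidef hS hM)
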